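/- Define r_1 := r_0/8 and recursively r_{k+1} := q_{2^k}(r_k - δ_k) for k ≥ 1, where δ_k = δ/4^k, δ = r_0/c_1, q_m = m^{-b/m}, and c_1 ≥ 4^{b+2}/3. Then for all k ≥ 1, r_k ≥ 4^{-b}(1/8 - (4^b/3)(1/c_1)) r_0; in particular with c_1 = 4^{b+2}/3 one has r_k ≥ r_0/4^{b+2}. -/

import Mathlib

set_option maxHeartbeats 800000 in
theorem stmt5_key (r0 b c1 : ℝ) (hr0 : 0 < r0) (hb : 1 ≤ b)
  (hc1 : (4 : ℝ) ^ (b + 2) / 3 ≤ c1)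
  (q : ℕ → ℝ) (hq : ∀ m : ℕ, 0 < m → q m = (m : ℝ) ^ (-(b / (m : ℝ))))
  (δ : ℝ) (hδ : δ = r0 / c1)
  (r : ℕ → ℝ) (hr1 : r 1 = r0 / 8)
  (hrec : ∀ k : ℕ, 1 ≤ k → r (k + 1) = q (2 ^ k) * (r k - δ / 4 ^ k))
  (hc1pos : 0 < c1) (hδpos : 0 < δ) (hb0 : 0 ≤ b) : ∀ k : ℕ, 1 ≤ k →
    (2:ℝ)^(-(b * (2 - ((k:ℝ)+1)/(2:ℝ)^((k:ℝ)-1)))) * (r0/8)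
      - δ * (1 - (4:ℝ)^(1-(k:ℝ)))/3 ≤ r k := by
  intro k hk
  induction k with
  | zero => omega
  | succ n ih =>
    rcases Nat.lt_or_ge n 1 with h1 | hn
    · -- base case k = 1
      have hn0 : n = 0 := by omega
      subst hn0
      have e1 : ((0:ℕ):ℝ) + 1 = 1 := by norm_num
      rw [hr1]
      push_cast
      have e2 : (1:ℝ) - 1 = 0 := by ring
      rw [e2, Real.rpow_zero, Real.rpow_zero]
      norm_num
    · -- inductive step, n ≥ 1
      have IH := ih hn
      have h2n : (0:ℝ) < (2:ℝ)^(n:ℝ) := Real.rpow_pos_of_pos (by norm_num) _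
      have h4n : (0:ℝ) < (4:ℝ)^(n:ℕ) := by positivity
      -- q (2^n) as a power of 2
      have hQ : q (2^n) = (2:ℝ) ^ ((n:ℝ) * (-(b / (2:ℝ)^(n:ℝ)))) := by
        rw [hq (2^n) (by positivity)]
        push_cast
        rw [← Real.rpow_natCast (2:ℝ) n, ← Real.rpow_mul (by norm_num)]
      set Q := q (2^n) with hQdef
      have hQpos : 0 < Q := by rw [hQ]; exact Real.rpow_pos_of_pos (by norm_num) _
      have hQle : Q ≤ 1 := by
        rw [hQ]
        apply Real.rpow_le_one_of_one_le_of_nonpos (by norm_num)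
        have : 0 ≤ b / (2:ℝ)^(n:ℝ) := by positivity
        nlinarith [Nat.cast_nonneg (α := ℝ) n]
      set X := (2:ℝ)^(-(b * (2 - ((n:ℝ)+1)/(2:ℝ)^((n:ℝ)-1)))) with hX
      have hXpos : 0 < X := Real.rpow_pos_of_pos (by norm_num) _
      -- merging of exponents
      have hmerge : Q * X
          = (2:ℝ)^(-(b * (2 - (((n:ℝ)+1)+1)/(2:ℝ)^(((n:ℝ)+1)-1)))) := by
        rw [hQ, hX, ← Real.rpow_add (by norm_num)]
        congr 1
        have e1 : (2:ℝ)^((n:ℝ)-1) = (2:ℝ)^(n:ℝ) / (2:ℝ)^(1:ℝ) :=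
          Real.rpow_sub (by norm_num) _ _
        have e2 : ((n:ℝ)+1)-1 = (n:ℝ) := by ring
        rw [e2, e1, Real.rpow_one]
        field_simp
        ring
      -- 4-power identities
      have h4a : (4:ℝ)^(1-(n:ℝ)) = 4 / (4:ℝ)^(n:ℕ) := by
        rw [Real.rpow_sub (by norm_num), Real.rpow_one, Real.rpow_natCast]
      have h4b : (4:ℝ)^(1-((n:ℝ)+1)) = 1 / (4:ℝ)^(n:ℕ) := by
        have : (1:ℝ)-((n:ℝ)+1) = -(n:ℝ) := by ring
        rw [this, Real.rpow_neg (by norm_num), Real.rpow_natCast, one_div]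
      have hsnn : 0 ≤ 1 - (4:ℝ)^(1-(n:ℝ)) := by
        have : (4:ℝ)^(1-(n:ℝ)) ≤ 1 := by
          apply Real.rpow_le_one_of_one_le_of_nonpos (by norm_num)
          have : (1:ℝ) ≤ (n:ℝ) := by exact_mod_cast hn
          linarith
        linarith
      -- chain of inequalities
      have step1 : Q * r n - δ / 4^n ≤ r (n+1) := by
        rw [hrec n hn]
        have : Q * (δ / 4^n) ≤ δ / 4^n := by
          have hd : 0 ≤ δ / 4^n := by positivity
          nlinarith
        nlinarith
      have step2 : Q * (X * (r0/8) - δ * (1 - (4:ℝ)^(1-(n:ℝ)))/3) ≤ Q * r n :=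
        mul_le_mul_of_nonneg_left IH (le_of_lt hQpos)
      have step3 : Q * (δ * (1 - (4:ℝ)^(1-(n:ℝ)))/3)
          ≤ δ * (1 - (4:ℝ)^(1-(n:ℝ)))/3 := by
        have hd : 0 ≤ δ * (1 - (4:ℝ)^(1-(n:ℝ)))/3 := by
          have := hδpos.le; positivity
        nlinarith
      push_cast
      rw [← hmerge, h4b]
      have expand : Q * (X * (r0/8) - δ * (1 - (4:ℝ)^(1-(n:ℝ)))/3)
          = Q * X * (r0/8) - Q * (δ * (1 - (4:ℝ)^(1-(n:ℝ)))/3) := by ring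
      have goal_eq : Q * X * (r0/8) - δ * (1 - 1/(4:ℝ)^(n:ℕ))/3
          = Q * X * (r0/8) - δ * (1 - (4:ℝ)^(1-(n:ℝ)))/3 - δ / 4^n := by
        rw [h4a]; field_simp; ring
      rw [goal_eq]
      rw [expand] at step2
      linarith

/-- With `r_1 = r_0/8` and `r_{k+1} = q_{2^k}(r_k - δ_k)` where `δ_k = δ/4^k`,
`δ = r_0/c_1`, `q_m = m^(-b/m)`, `c_1 ≥ 4^{b+2}/3`, one has for all `k ≥ 1`
`r_k ≥ 4^{-b}(1/8 - (4^b/3)(1/c_1)) r_0`; with `c_1 = 4^{b+2}/3`, `r_k ≥ r_0/4^{b+2}`. -/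
theorem stmt5 (r0 b c1 : ℝ) (hr0 : 0 < r0) (hb : 1 ≤ b)
    (hc1 : (4 : ℝ) ^ (b + 2) / 3 ≤ c1)
    (q : ℕ → ℝ) (hq : ∀ m : ℕ, 0 < m → q m = (m : ℝ) ^ (-(b / (m : ℝ))))
    (δ : ℝ) (hδ : δ = r0 / c1)
    (r : ℕ → ℝ) (hr1 : r 1 = r0 / 8)
    (hrec : ∀ k : ℕ, 1 ≤ k → r (k + 1) = q (2 ^ k) * (r k - δ / 4 ^ k)) :
    (∀ k : ℕ, 1 ≤ k →
      (4 : ℝ) ^ (-b) * (1 / 8 - (4 : ℝ) ^ b / 3 * (1 / c1)) * r0 ≤ r k) ∧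
    (c1 = (4 : ℝ) ^ (b + 2) / 3 →
      ∀ k : ℕ, 1 ≤ k → r0 / (4 : ℝ) ^ (b + 2) ≤ r k) := by
  have hc1pos : 0 < c1 := lt_of_lt_of_le (by positivity) hc1
  have hδpos : 0 < δ := by rw [hδ]; positivity
  have hb0 : 0 ≤ b := le_trans zero_le_one hb
  -- the invariant
  have key := stmt5_key r0 b c1 hr0 hb hc1 q hq δ hδ r hr1 hrec hc1pos hδpos hb0
  -- first conclusion
  have h4b4 : (4:ℝ)^(-b) * (4:ℝ)^b = 1 := by
    rw [← Real.rpow_add (by norm_num)]; norm_num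
  have h4bpos : (0:ℝ) < (4:ℝ)^b := Real.rpow_pos_of_pos (by norm_num) _
  have h4nbpos : (0:ℝ) < (4:ℝ)^(-b) := Real.rpow_pos_of_pos (by norm_num) _
  have main : ∀ k : ℕ, 1 ≤ k →
      (4 : ℝ) ^ (-b) * (1 / 8 - (4 : ℝ) ^ b / 3 * (1 / c1)) * r0 ≤ r k := by
    intro k hk
    have hkey := key k hk
    have h2k : (0:ℝ) < (2:ℝ)^((k:ℝ)-1) := Real.rpow_pos_of_pos (by norm_num) _
    -- X k ≥ 4^(-b)
    have hXlb : (4:ℝ)^(-b) ≤ (2:ℝ)^(-(b * (2 - ((k:ℝ)+1)/(2:ℝ)^((k:ℝ)-1)))) := by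
      have e4 : (4:ℝ)^(-b) = (2:ℝ)^(-(2*b)) := by
        rw [show (4:ℝ) = (2:ℝ)^(2:ℝ) by
          rw [show (2:ℝ) = ((2:ℕ):ℝ) by norm_num, Real.rpow_natCast]; norm_num,
          ← Real.rpow_mul (by norm_num)]
        ring_nf
      rw [e4]
      apply Real.rpow_le_rpow_left_iff (x := 2) (by norm_num) |>.mpr
      have hfrac : 0 ≤ ((k:ℝ)+1)/(2:ℝ)^((k:ℝ)-1) := by positivity
      nlinarith
    -- δ-term bound
    have hs : δ * (1 - (4:ℝ)^(1-(k:ℝ)))/3 ≤ δ/3 := by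
      have : (0:ℝ) ≤ (4:ℝ)^(1-(k:ℝ)) := le_of_lt (Real.rpow_pos_of_pos (by norm_num) _)
      nlinarith
    -- target equals 4^(-b)*(r0/8) - δ/3
    have htarget : (4 : ℝ) ^ (-b) * (1 / 8 - (4 : ℝ) ^ b / 3 * (1 / c1)) * r0
        = (4:ℝ)^(-b) * (r0/8) - δ/3 := by
      rw [hδ, Real.rpow_neg (by norm_num : (0:ℝ) ≤ 4)]
      field_simp
    rw [htarget]
    have : (4:ℝ)^(-b) * (r0/8) ≤ (2:ℝ)^(-(b * (2 - ((k:ℝ)+1)/(2:ℝ)^((k:ℝ)-1)))) * (r0/8) := by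
      apply mul_le_mul_of_nonneg_right hXlb (by positivity)
    linarith
  refine ⟨main, ?_⟩
  intro hc k hk
  have := main k hk
  have hval : r0 / (4 : ℝ) ^ (b + 2)
      = (4 : ℝ) ^ (-b) * (1 / 8 - (4 : ℝ) ^ b / 3 * (1 / c1)) * r0 := by
    have h42 : (4:ℝ)^(2:ℝ) = 16 := by
      rw [show (2:ℝ) = ((2:ℕ):ℝ) by norm_num, Real.rpow_natCast]; norm_num
    have h1 : (4:ℝ)^(b+2) = (4:ℝ)^b * 16 := by
      rw [Real.rpow_add (by norm_num), h42]
    have hneg : (4:ℝ)^(-b) = ((4:ℝ)^b)⁻¹ := Real.rpow_neg (by norm_num) b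
    rw [hc, h1, hneg]
    field_simp
    ring
  linarith
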